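/- Let L > 0, κ > 0, w : [0,L] → ℝ continuous, and let μ be a finite Borel measure on [0,L] with total mass η := μ([0,L]) satisfying 0 < η ≤ 1. Then there exists a unique p* ∈ C([0,L]) with Ψ_{w,μ}(p*) = p*, and this fixed point satisfies −‖w‖_∞ ≤ p*(x) ≤ 1 for all x ∈ [0,L]. -/

import Mathlib

open MeasureTheory

/-- The market-price map `Ψ_{w,μ}(p)(x) = a + c·p̄ − (1/2)(a + c·p̄ − w(x))⁺`,
with `η = μ([0,L])`, `a = 1/(1+κη)`, `c = 1 − a` and `p̄ = (1/η)∫ p dμ`. -/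
noncomputable def Psi (L κ : ℝ) (w : C(Set.Icc (0:ℝ) L, ℝ))
    (μ : Measure (Set.Icc (0:ℝ) L)) (p : C(Set.Icc (0:ℝ) L, ℝ))
    (x : Set.Icc (0:ℝ) L) : ℝ :=
  let η : ℝ := (μ Set.univ).toReal
  let a : ℝ := 1 / (1 + κ * η)
  let c : ℝ := 1 - a
  let pbar : ℝ := (1 / η) * ∫ y, p y ∂μ
  a + c * pbar - (1 / 2) * max (a + c * pbar - w x) 0

set_option maxHeartbeats 1000000

/-- `Ψ_{w,μ}` has a unique fixed point `p*` in `C([0,L])`, and it satisfies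
`−‖w‖_∞ ≤ p* ≤ 1`. -/
theorem Psi_exists_unique_fixedPoint (L κ : ℝ) (hL : 0 < L) (hκ : 0 < κ)
    (w : C(Set.Icc (0:ℝ) L, ℝ))
    (μ : Measure (Set.Icc (0:ℝ) L)) [IsFiniteMeasure μ]
    (hη : 0 < (μ Set.univ).toReal) (hη1 : (μ Set.univ).toReal ≤ 1) :
    (∃! pstar : C(Set.Icc (0:ℝ) L, ℝ),
      ∀ x : Set.Icc (0:ℝ) L, Psi L κ w μ pstar x = pstar x) ∧
    (∀ pstar : C(Set.Icc (0:ℝ) L, ℝ),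
      (∀ x : Set.Icc (0:ℝ) L, Psi L κ w μ pstar x = pstar x) →
      ∀ x : Set.Icc (0:ℝ) L,
        -(⨆ y : Set.Icc (0:ℝ) L, |w y|) ≤ pstar x ∧ pstar x ≤ 1) := by
  haveI : Nonempty (Set.Icc (0:ℝ) L) := ⟨⟨0, Set.mem_Icc.2 ⟨le_refl 0, hL.le⟩⟩⟩
  set η : ℝ := (μ Set.univ).toReal with hηdef
  set a : ℝ := 1 / (1 + κ * η) with hadef
  set c : ℝ := 1 - a with hcdef
  have hκη : 0 < κ * η := mul_pos hκ hη
  have hden : 0 < 1 + κ * η := by linarith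
  have ha0 : 0 < a := by rw [hadef]; positivity
  have ha1 : a < 1 := by
    rw [hadef, div_lt_one hden]; linarith
  have hc0 : 0 < c := by rw [hcdef]; linarith
  have hc1 : c < 1 := by rw [hcdef]; linarith
  have hca : c = 1 - a := hcdef
  clear_value η a c
  -- integrability of the relevant integrands
  have hint : ∀ A : ℝ, Integrable (fun y : Set.Icc (0:ℝ) L => max (A - w y) 0) μ := by
    intro A
    have hf : Continuous fun y : Set.Icc (0:ℝ) L => max (A - w y) 0 :=
      (continuous_const.sub w.continuous).max continuous_const
    simpa [IntegrableOn] using hf.continuousOn.integrableOn_compact (μ := μ) isCompact_univ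
  -- the scalar map
  set g : ℝ → ℝ := fun s =>
    a + c * s - (1 / 2) * ((1 / η) * ∫ y, max (a + c * s - w y) 0 ∂μ) with hgdef
  -- key monotone-difference estimate
  have key : ∀ s t : ℝ, t ≤ s → 0 ≤ g s - g t ∧ g s - g t ≤ c * (s - t) := by
    intro s t hts
    have hpt : ∀ y : Set.Icc (0:ℝ) L,
        max (a + c * t - w y) 0 ≤ max (a + c * s - w y) 0 := by
      intro y
      have : a + c * t - w y ≤ a + c * s - w y := by nlinarith
      exact max_le_max this le_rfl
    have hpt2 : ∀ y : Set.Icc (0:ℝ) L,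
        max (a + c * s - w y) 0 - max (a + c * t - w y) 0 ≤ c * (s - t) := by
      intro y
      have h1 : a + c * s - w y ≤ (a + c * t - w y) + c * (s - t) := by ring_nf; linarith
      have h2 : max (a + c * s - w y) 0 ≤ max (a + c * t - w y) 0 + c * (s - t) := by
        rcases le_or_gt (a + c * s - w y) 0 with h | h
        · have := le_max_right (a + c * t - w y) (0:ℝ)
          have hcst : 0 ≤ c * (s - t) := by nlinarith
          simp [max_eq_right h]; nlinarith [le_max_right (a + c * t - w y) (0:ℝ)]
        · have := le_max_left (a + c * t - w y) (0:ℝ)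
          rw [max_eq_left h.le]; linarith
      linarith
    set D : ℝ := (∫ y, max (a + c * s - w y) 0 ∂μ) - ∫ y, max (a + c * t - w y) 0 ∂μ with hDdef
    have hD0 : 0 ≤ D := by
      have := integral_mono (hint (a + c * t)) (hint (a + c * s)) hpt
      simp only [hDdef]; linarith
    have hDle : D ≤ η * (c * (s - t)) := by
      have hsub : (∫ y, (max (a + c * s - w y) 0 - max (a + c * t - w y) 0) ∂μ) = D := by
        rw [integral_sub (hint (a + c * s)) (hint (a + c * t))]
      have hmono := integral_mono
        ((hint (a + c * s)).sub (hint (a + c * t)))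
        (integrable_const (c * (s - t))) hpt2
      simp only [Pi.sub_apply] at hmono
      rw [hsub, integral_const, smul_eq_mul, measureReal_def, ← hηdef] at hmono
      exact hmono
    have hD1 : 0 ≤ (1 / η) * D := mul_nonneg (one_div_pos.mpr hη).le hD0
    have hD2 : (1 / η) * D ≤ c * (s - t) := by
      have h1 : (1 / η) * D ≤ (1 / η) * (η * (c * (s - t))) :=
        mul_le_mul_of_nonneg_left hDle (one_div_pos.mpr hη).le
      rw [one_div, inv_mul_cancel_left₀ hη.ne'] at h1
      rw [one_div]
      exact h1
    have hgst : g s - g t = c * (s - t) - (1 / 2) * ((1 / η) * D) := by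
      simp only [hgdef, hDdef]; ring
    constructor <;> rw [hgst] <;> linarith
  -- g is a contraction with constant c
  have hlip : ∀ s t : ℝ, |g s - g t| ≤ c * |s - t| := by
    intro s t
    rcases le_total t s with h | h
    · obtain ⟨h1, h2⟩ := key s t h
      rw [abs_of_nonneg h1, abs_of_nonneg (by linarith : (0:ℝ) ≤ s - t)]; exact h2
    · obtain ⟨h1, h2⟩ := key t s h
      rw [abs_sub_comm, abs_sub_comm s t, abs_of_nonneg h1,
        abs_of_nonneg (by linarith : (0:ℝ) ≤ t - s)]; exact h2
  have hcontr : ContractingWith ⟨c, hc0.le⟩ g := by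
    constructor
    · exact_mod_cast hc1
    · refine LipschitzWith.of_dist_le_mul fun x y => ?_
      rw [Real.dist_eq, Real.dist_eq]; exact hlip x y
  obtain ⟨sstar, hgs, hsuniq⟩ : ∃ s : ℝ, g s = s ∧ ∀ u : ℝ, g u = u → u = s :=
    ⟨hcontr.fixedPoint g, hcontr.fixedPoint_isFixedPt,
      fun u hu => hcontr.fixedPoint_unique hu⟩
  clear_value g
  -- how Psi unfolds
  have hPsi : ∀ (q : C(Set.Icc (0:ℝ) L, ℝ)) (x : Set.Icc (0:ℝ) L),
      Psi L κ w μ q x = a + c * ((1 / η) * ∫ y, q y ∂μ)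
        - (1 / 2) * max (a + c * ((1 / η) * ∫ y, q y ∂μ) - w x) 0 := by
    intro q x
    simp only [Psi, ← hηdef, ← hadef, ← hcdef]
  -- average of a function of the canonical shape
  have havg : ∀ A : ℝ,
      (1 / η) * (∫ y, (A - (1 / 2) * max (A - w y) 0) ∂μ)
        = A - (1 / 2) * ((1 / η) * ∫ y, max (A - w y) 0 ∂μ) := by
    intro A
    rw [integral_sub (integrable_const A) ((hint A).const_mul (1 / 2)),
      integral_const, smul_eq_mul, integral_const_mul, measureReal_def, ← hηdef]
    field_simp
  -- the candidate fixed point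
  set pstar : C(Set.Icc (0:ℝ) L, ℝ) :=
    ⟨fun x => a + c * sstar - (1 / 2) * max (a + c * sstar - w x) 0,
      continuous_const.sub (continuous_const.mul
        ((continuous_const.sub w.continuous).max continuous_const))⟩ with hpdef
  have hpbar : (1 / η) * ∫ y, pstar y ∂μ = sstar := by
    have : (1 / η) * ∫ y, pstar y ∂μ = g sstar := by
      simp only [hpdef, ContinuousMap.coe_mk]
      rw [havg (a + c * sstar), hgdef]
    rw [this, hgs]
  have hpfix : ∀ x : Set.Icc (0:ℝ) L, Psi L κ w μ pstar x = pstar x := by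
    intro x
    rw [hPsi pstar x, hpbar]
    rfl
  -- any fixed point has average which is a fixed point of g, hence equals sstar
  have hanalysis : ∀ q : C(Set.Icc (0:ℝ) L, ℝ),
      (∀ x : Set.Icc (0:ℝ) L, Psi L κ w μ q x = q x) →
      ∀ x : Set.Icc (0:ℝ) L,
        q x = a + c * sstar - (1 / 2) * max (a + c * sstar - w x) 0 := by
    intro q hq
    set t : ℝ := (1 / η) * ∫ y, q y ∂μ with htdef
    have hqx : ∀ x : Set.Icc (0:ℝ) L,
        q x = a + c * t - (1 / 2) * max (a + c * t - w x) 0 := by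
      intro x
      rw [← hq x, hPsi q x]
    have hgt : g t = t := by
      have hIq : (∫ y, q y ∂μ)
          = ∫ y, (a + c * t - (1 / 2) * max (a + c * t - w y) 0) ∂μ :=
        integral_congr_ae (Filter.Eventually.of_forall fun y => hqx y)
      conv_rhs => rw [htdef, hIq, havg (a + c * t)]
      rw [hgdef]
    have hts : t = sstar := hsuniq t hgt
    intro x
    rw [hqx x, hts]
  constructor
  · refine ⟨pstar, hpfix, fun q hq => ?_⟩
    ext x
    rw [hanalysis q hq x, hpdef]
    rfl
  · -- bounds
    intro q hq x
    set M : ℝ := ⨆ y : Set.Icc (0:ℝ) L, |w y| with hMdef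
    have hbdd : BddAbove (Set.range fun y : Set.Icc (0:ℝ) L => |w y|) :=
      (isCompact_range (continuous_abs.comp w.continuous)).bddAbove
    have hwM : ∀ y : Set.Icc (0:ℝ) L, |w y| ≤ M := fun y => le_ciSup hbdd y
    have hM0 : 0 ≤ M := le_trans (abs_nonneg _) (hwM (Classical.arbitrary _))
    clear_value M
    -- bounds on sstar from sstar = g sstar
    have hInn : 0 ≤ ∫ y, max (a + c * sstar - w y) 0 ∂μ :=
      integral_nonneg fun y => le_max_right _ 0
    have hs_upper : sstar ≤ 1 := by
      have h0 : 0 ≤ (1 / η) * ∫ y, max (a + c * sstar - w y) 0 ∂μ :=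
        mul_nonneg (one_div_pos.mpr hη).le hInn
      have h1 : sstar ≤ a + c * sstar := by
        conv_lhs => rw [← hgs]
        simp only [hgdef]
        linarith
      nlinarith
    have hIub : (∫ y, max (a + c * sstar - w y) 0 ∂μ) ≤ η * max (a + c * sstar + M) 0 := by
      have hmono := integral_mono (hint (a + c * sstar))
        (integrable_const (max (a + c * sstar + M) 0))
        (fun y => max_le_max (by nlinarith [hwM y, neg_abs_le (w y)]) le_rfl)
      rwa [integral_const, smul_eq_mul, measureReal_def, ← hηdef] at hmono
    have hs_lb : a + c * sstar - (1 / 2) * max (a + c * sstar + M) 0 ≤ sstar := by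
      conv_rhs => rw [← hgs]
      simp only [hgdef]
      have h1 : (1 / η) * (∫ y, max (a + c * sstar - w y) 0 ∂μ)
          ≤ max (a + c * sstar + M) 0 := by
        have h2 := mul_le_mul_of_nonneg_left hIub (one_div_pos.mpr hη).le
        rw [one_div, inv_mul_cancel_left₀ hη.ne'] at h2
        rw [one_div]
        exact h2
      linarith
    have hA_lb : -M ≤ a + c * sstar := by
      rcases le_or_gt (a + c * sstar + M) 0 with h | h
      · rw [max_eq_right h] at hs_lb
        have hs1 : 1 ≤ sstar := by nlinarith
        nlinarith
      · rw [max_eq_left h.le] at hs_lb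
        nlinarith
    -- pointwise bounds
    have hqx := hanalysis q hq x
    constructor
    · rw [hqx]
      have hw1 : -(w x) ≤ M := le_trans (neg_le_abs (w x)) (hwM x)
      have h1 : max (a + c * sstar - w x) 0 ≤ max (a + c * sstar + M) 0 :=
        max_le_max (by linarith) le_rfl
      have h2 : max (a + c * sstar + M) 0 = a + c * sstar + M :=
        max_eq_left (by linarith)
      linarith
    · rw [hqx]
      have h3 : 0 ≤ max (a + c * sstar - w x) 0 := le_max_right _ 0
      have h4 : c * sstar ≤ c := mul_le_of_le_one_right hc0.le hs_upper
      linarith
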